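/- Let F be continuous on [a,b] and differentiable on (a,b), with least concave majorant F̂ and Z_F = {x ∈ [a,b] : F̂(x) = F(x)}. Let M = max F, and let c1 be the smallest point at which F attains M. Suppose (α,β) is a connected component of [a,b] \ Z_F contained in [a,c1) with α > a. Then F'(α) > 0, F(x) < F(α) + (x−α)F'(α) for every x ∈ (α,β), and consequently F is not convex (in particular not affine) on any interval [α, α+η] with 0 < η ≤ β−α. -/

import Mathlib

open Set

/-- The least concave majorant of `F` on `[a, b]`. -/
noncomputable def leastConcaveMajorant (a b : ℝ) (F : ℝ → ℝ) (x : ℝ) : ℝ :=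
  sInf {y : ℝ | ∃ G : ℝ → ℝ, ConcaveOn ℝ (Set.Icc a b) G ∧
    (∀ z ∈ Set.Icc a b, F z ≤ G z) ∧ y = G x}

private lemma lcm_le_majorant {a b : ℝ} {F G : ℝ → ℝ} (hG : ConcaveOn ℝ (Set.Icc a b) G)
    (hFG : ∀ z ∈ Set.Icc a b, F z ≤ G z) {x : ℝ} (hx : x ∈ Set.Icc a b) :
    leastConcaveMajorant a b F x ≤ G x :=
  csInf_le ⟨F x, by rintro y ⟨G', hG', hFG', rfl⟩; exact hFG' x hx⟩ ⟨G, hG, hFG, rfl⟩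

private lemma le_lcm {a b : ℝ} {F : ℝ → ℝ} {M : ℝ} (hM : ∀ z ∈ Set.Icc a b, F z ≤ M)
    {x : ℝ} (hx : x ∈ Set.Icc a b) : F x ≤ leastConcaveMajorant a b F x :=
  le_csInf ⟨M, fun _ => M, concaveOn_const M (convex_Icc a b), fun z hz => hM z hz, rfl⟩
    (by rintro y ⟨G, hG, hFG, rfl⟩; exact hFG x hx)

private lemma lcm_concave {a b : ℝ} {F : ℝ → ℝ} {M : ℝ} (hM : ∀ z ∈ Set.Icc a b, F z ≤ M) :
    ConcaveOn ℝ (Set.Icc a b) (leastConcaveMajorant a b F) := by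
  refine ⟨convex_Icc a b, ?_⟩
  intro x hx y hy p q hp hq hpq
  refine le_csInf ⟨M, fun _ => M, concaveOn_const M (convex_Icc a b), fun z hz => hM z hz, rfl⟩ ?_
  rintro r ⟨G, hG, hFG, rfl⟩
  have h1 : leastConcaveMajorant a b F x ≤ G x := lcm_le_majorant hG hFG hx
  have h2 : leastConcaveMajorant a b F y ≤ G y := lcm_le_majorant hG hFG hy
  have h3 := hG.2 hx hy hp hq hpq
  simp only [smul_eq_mul] at h3 ⊢
  nlinarith [mul_le_mul_of_nonneg_left h1 hp, mul_le_mul_of_nonneg_left h2 hq]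

private lemma affine_concave {s : Set ℝ} (hs : Convex ℝ s) (m k : ℝ) :
    ConcaveOn ℝ s (fun x => m * x + k) := by
  refine ⟨hs, ?_⟩
  intro x _ y _ p q hp hq hpq
  simp only [smul_eq_mul]
  exact le_of_eq (by linear_combination k * hpq)

theorem stmt9 (a b : ℝ) (hab : a < b) (F : ℝ → ℝ)
    (hF : ContinuousOn F (Set.Icc a b))
    (hFdiff : ∀ x ∈ Set.Ioo a b, DifferentiableAt ℝ F x)
    (Z : Set ℝ)
    (hZ : Z = {x ∈ Set.Icc a b | leastConcaveMajorant a b F x = F x})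
    (M : ℝ) (hM : ∀ x ∈ Set.Icc a b, F x ≤ M)
    (c1 : ℝ) (hc1 : c1 = sInf {x ∈ Set.Icc a b | F x = M})
    (hc1mem : c1 ∈ Set.Icc a b) (hc1max : F c1 = M)
    (α β : ℝ) (t : ℝ) (ht : t ∈ Set.Icc a b \ Z)
    (hJ : Set.Ioo α β = connectedComponentIn (Set.Icc a b \ Z) t)
    (hsub : Set.Ioo α β ⊆ Set.Ico a c1) (hα : a < α) :
    0 < deriv F α ∧
    (∀ x ∈ Set.Ioo α β, F x < F α + (x - α) * deriv F α) ∧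
    (∀ η : ℝ, 0 < η → η ≤ β - α → ¬ ConvexOn ℝ (Set.Icc α (α + η)) F) := by
  set Fh := leastConcaveMajorant a b F with hFhdef
  -- component facts
  have hJsub : Ioo α β ⊆ Icc a b \ Z := hJ ▸ connectedComponentIn_subset _ _
  have htJ : t ∈ Ioo α β := hJ ▸ mem_connectedComponentIn ht
  have hαβ : α < β := htJ.1.trans htJ.2
  have hβb : β ≤ b := by
    by_contra hb
    push_neg at hb
    have hx : max ((α+β)/2) ((b+β)/2) ∈ Ioo α β := by
      constructor
      · exact lt_of_lt_of_le (by linarith) (le_max_left _ _)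
      · exact max_lt (by linarith) (by linarith)
    exact absurd ((hJsub hx).1.2) (by simp only [not_le]; exact lt_of_lt_of_le (by linarith) (le_max_right _ _))
  have hβc1 : β ≤ c1 := by
    by_contra hb
    push_neg at hb
    have hx : max ((α+β)/2) ((c1+β)/2) ∈ Ioo α β := by
      constructor
      · exact lt_of_lt_of_le (by linarith) (le_max_left _ _)
      · exact max_lt (by linarith) (by linarith)
    exact absurd (hsub hx).2 (by simp only [not_lt]; exact le_trans (by linarith) (le_max_right _ _))
  have hαb : α < b := hαβ.trans_le hβb
  have hαc1 : α < c1 := hαβ.trans_le hβc1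
  have hαIcc : α ∈ Icc a b := ⟨hα.le, hαb.le⟩
  have hβIcc : β ∈ Icc a b := ⟨(hα.trans hαβ).le, hβb⟩
  have hαZ : α ∈ Z := by
    by_contra hαZ
    have h1 : Ico α β ⊆ connectedComponentIn (Icc a b \ Z) t :=
      isPreconnected_Ico.subset_connectedComponentIn (mem_Ico_of_Ioo htJ)
        (fun x hx => hx.1.eq_or_lt.elim (fun h => h ▸ ⟨hαIcc, hαZ⟩) (fun h => hJsub ⟨h, hx.2⟩))
    have := hJ ▸ h1 (left_mem_Ico.2 hαβ)
    exact absurd this.1 (lt_irrefl α)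
  have hβZ : β ∈ Z := by
    by_contra hβZ
    have h1 : Ioc α β ⊆ connectedComponentIn (Icc a b \ Z) t :=
      isPreconnected_Ioc.subset_connectedComponentIn (mem_Ioc_of_Ioo htJ)
        (fun x hx => hx.2.eq_or_lt.elim (fun h => h ▸ ⟨hβIcc, hβZ⟩) (fun h => hJsub ⟨hx.1, h⟩))
    have := hJ ▸ h1 (right_mem_Ioc.2 hαβ)
    exact absurd this.2 (lt_irrefl β)
  have hFhα : Fh α = F α := by rw [hZ] at hαZ; exact hαZ.2
  have hFhβ : Fh β = F β := by rw [hZ] at hβZ; exact hβZ.2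
  have hconc : ConcaveOn ℝ (Icc a b) Fh := lcm_concave hM
  have hFle : ∀ x ∈ Icc a b, F x ≤ Fh x := fun x hx => le_lcm hM hx
  -- slope and line
  set s := (F β - F α) / (β - α) with hsdef
  set L := fun x : ℝ => F α + s * (x - α) with hLdef
  have hLα : L α = F α := by simp [hLdef]
  have hβα0 : β - α ≠ 0 := by linarith
  have hLβ : L β = F β := by
    simp only [hLdef, hsdef]
    field_simp
    ring
  -- Fh below extended chord outside [α, β]
  have hleft : ∀ x ∈ Icc a b, x < α → Fh x ≤ L x := by
    intro x hx hxα
    have := hconc.slope_anti_adjacent hx hβIcc hxα (hαβ)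
    rw [hFhα, hFhβ] at this
    rw [div_le_div_iff₀ (by linarith) (by linarith)] at this
    simp only [hLdef, hsdef]
    rw [show F α + (F β - F α) / (β - α) * (x - α) = (F α * (β - α) + (F β - F α) * (x - α)) / (β - α) by field_simp, le_div_iff₀ (by linarith)]
    nlinarith
  have hright : ∀ x ∈ Icc a b, β < x → Fh x ≤ L x := by
    intro x hx hβx
    have := hconc.slope_anti_adjacent hαIcc hx hαβ hβx
    rw [hFhα, hFhβ] at this
    rw [div_le_div_iff₀ (by linarith) (by linarith)] at this
    simp only [hLdef, hsdef]
    rw [show F α + (F β - F α) / (β - α) * (x - α) = (F α * (β - α) + (F β - F α) * (x - α)) / (β - α) by field_simp, le_div_iff₀ (by linarith)]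
    nlinarith
  -- no interior point of (α,β) can maximize F - L on [α,β]
  have hIccsub : Icc α β ⊆ Icc a b := Icc_subset_Icc hα.le hβb
  have hnoin : ∀ x₀ ∈ Ioo α β, (∀ z ∈ Icc α β, F z - L z ≤ F x₀ - L x₀) → False := by
    intro x₀ hx₀ hmax
    set d := F x₀ - L x₀ with hddef
    have hd0 : 0 ≤ d := by
      have h := hmax α (left_mem_Icc.2 hαβ.le)
      rw [hLα] at h; linarith
    have h2 : ConcaveOn ℝ (Icc a b) (fun x => L x + d) := by
      have h3 := affine_concave (convex_Icc a b) s (F α - s * α + d)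
      have he : (fun x => L x + d) = (fun x : ℝ => s * x + (F α - s * α + d)) := by
        funext x; simp only [hLdef]; ring
      rw [he]; exact h3
    have hGconc : ConcaveOn ℝ (Icc a b) (Fh ⊓ fun x => L x + d) := hconc.inf h2
    have hGmaj : ∀ z ∈ Icc a b, F z ≤ (Fh ⊓ fun x => L x + d) z := by
      intro z hz
      simp only [Pi.inf_apply, le_inf_iff]
      refine ⟨hFle z hz, ?_⟩
      rcases lt_or_ge z α with h | h
      · have h1 := hleft z hz h
        linarith [hFle z hz]
      rcases le_or_gt z β with h' | h'
      · have := hmax z ⟨h, h'⟩; linarith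
      · have h1 := hright z hz h'
        linarith [hFle z hz]
    have hx₀Icc : x₀ ∈ Icc a b := hIccsub (Ioo_subset_Icc_self hx₀)
    have h1 : Fh x₀ ≤ (Fh ⊓ fun x => L x + d) x₀ := lcm_le_majorant hGconc hGmaj hx₀Icc
    have h2' : Fh x₀ = F x₀ := by
      refine le_antisymm ?_ (hFle x₀ hx₀Icc)
      calc Fh x₀ ≤ (Fh ⊓ fun x => L x + d) x₀ := h1
        _ ≤ L x₀ + d := by simp only [Pi.inf_apply]; exact inf_le_right
        _ = F x₀ := by rw [hddef]; ring
    exact (hJsub hx₀).2 (hZ ▸ ⟨hx₀Icc, h2'⟩)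
  -- F ≤ L on [α,β], strictly on (α,β)
  have hcont : ContinuousOn (fun z => F z - L z) (Icc α β) := by
    refine (hF.mono hIccsub).sub (Continuous.continuousOn ?_)
    simp only [hLdef]
    exact continuous_const.add (continuous_const.mul (continuous_id.sub continuous_const))
  obtain ⟨xs, hxsK, hxsmax⟩ := isCompact_Icc.exists_isMaxOn (nonempty_Icc.2 hαβ.le) hcont
  have hxsmax' : ∀ z ∈ Icc α β, F z - L z ≤ F xs - L xs := fun z hz => isMaxOn_iff.1 hxsmax z hz
  have hdzero : F xs - L xs = 0 := by
    rcases eq_or_lt_of_le hxsK.1 with h | h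
    · rw [← h, hLα]; ring
    rcases eq_or_lt_of_le hxsK.2 with h' | h'
    · rw [h', hLβ]; ring
    · exact absurd (hnoin xs ⟨h, h'⟩ hxsmax') id
  have hFL_le : ∀ x ∈ Icc α β, F x ≤ L x := by
    intro x hx; have := hxsmax' x hx; linarith
  have hFL_lt : ∀ x ∈ Ioo α β, F x < L x := by
    intro x hx
    rcases (hFL_le x (Ioo_subset_Icc_self hx)).lt_or_eq with h | h
    · exact h
    · exact absurd (hnoin x hx (fun z hz => by have := hFL_le z hz; linarith)) id
  have hFL_glob : ∀ x ∈ Icc a b, F x ≤ L x := by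
    intro x hx
    rcases lt_or_ge x α with h | h
    · exact (hFle x hx).trans (hleft x hx h)
    rcases le_or_gt x β with h' | h'
    · exact hFL_le x ⟨h, h'⟩
    · exact (hFle x hx).trans (hright x hx h')
  -- derivative of F at α equals s
  have hdiffα : DifferentiableAt ℝ F α := hFdiff α ⟨hα, hαb⟩
  have hLd : HasDerivAt L s α := by
    have h : HasDerivAt (fun x : ℝ => F α + s * (x - α)) (s * 1) α :=
      (((hasDerivAt_id α).sub_const α).const_mul s).const_add (F α)
    rw [hLdef]; simpa using h
  have hlocmax : IsLocalMax (fun x => F x - L x) α := by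
    filter_upwards [Icc_mem_nhds hα hαb] with x hx
    have := hFL_glob x hx
    simp only [hLα]; linarith
  have hderiv0 := hlocmax.deriv_eq_zero
  have hds : deriv F α = s := by
    rw [deriv_fun_sub hdiffα hLd.differentiableAt, hLd.deriv] at hderiv0
    linarith
  -- positivity of s
  have hFαM : F α < M := by
    rcases (hM α hαIcc).lt_or_eq with h | h
    · exact h
    · exfalso
      have hc : c1 ≤ α := hc1 ▸ csInf_le ⟨a, fun x hx => hx.1.1⟩ ⟨hαIcc, h⟩
      linarith
  have hFhc1 : Fh c1 = M :=
    le_antisymm (lcm_le_majorant (concaveOn_const M (convex_Icc a b)) hM hc1mem)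
      (hc1max ▸ hFle c1 hc1mem)
  have hspos : 0 < s := by
    have hp : (0:ℝ) ≤ (c1 - β)/(c1 - α) := div_nonneg (by linarith) (by linarith)
    have hq : (0:ℝ) < (β - α)/(c1 - α) := div_pos (by linarith) (by linarith)
    have hpq : (c1 - β)/(c1 - α) + (β - α)/(c1 - α) = 1 := by
      rw [← add_div, show c1 - β + (β - α) = c1 - α by ring, div_self (by linarith)]
    have hcomb := hconc.2 hαIcc hc1mem hp hq.le hpq
    simp only [smul_eq_mul] at hcomb
    have hxval : (c1 - β)/(c1 - α) * α + (β - α)/(c1 - α) * c1 = β := by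
      rw [div_mul_eq_mul_div, div_mul_eq_mul_div, ← add_div, div_eq_iff (by linarith)]
      ring
    rw [hxval, hFhβ, hFhα, hFhc1] at hcomb
    rw [show (c1 - β)/(c1 - α) = 1 - (β - α)/(c1 - α) by linarith] at hcomb
    have hkey : (1 - (β - α)/(c1 - α)) * F α + (β - α)/(c1 - α) * M
        = F α + (β - α)/(c1 - α) * (M - F α) := by ring
    rw [hkey] at hcomb
    have hqM := mul_pos hq (sub_pos.2 hFαM)
    have hFαβ : F α < F β := by linarith
    exact div_pos (by linarith) (by linarith)
  have hmain2 : ∀ x ∈ Ioo α β, F x < F α + (x - α) * deriv F α := by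
    intro x hx
    have h := hFL_lt x hx
    simp only [hLdef] at h
    rw [hds]; linarith [h, mul_comm s (x - α)]
  refine ⟨by rw [hds]; exact hspos, hmain2, ?_⟩
  intro η hη hηβ hconv
  set x₀ := α + η/2 with hx₀def
  have hx₀Ioo : x₀ ∈ Ioo α β := ⟨by simp [hx₀def]; linarith, by simp only [hx₀def]; linarith⟩
  have hx₀s : x₀ ∈ Icc α (α + η) := ⟨by simp only [hx₀def]; linarith, by simp only [hx₀def]; linarith⟩
  have hαs : α ∈ Icc α (α + η) := left_mem_Icc.2 (by linarith)
  have hslope_mono : ∀ y ∈ Ioo α x₀, (F y - F α)/(y - α) ≤ (F x₀ - F α)/(x₀ - α) := by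
    intro y hy
    have h := hconv.slope_mono_adjacent hαs hx₀s hy.1 hy.2
    rw [div_le_div_iff₀ (sub_pos.2 hy.1) (sub_pos.2 hy.2)] at h
    rw [div_le_div_iff₀ (sub_pos.2 hy.1) (sub_pos.2 hx₀Ioo.1)]
    nlinarith
  have htend : Filter.Tendsto (slope F α) (nhdsWithin α (Set.Ioi α)) (nhds (deriv F α)) :=
    (hasDerivAt_iff_tendsto_slope.1 hdiffα.hasDerivAt).mono_left
      (nhdsWithin_mono α (fun y hy => Set.mem_compl_singleton_iff.2 (ne_of_gt hy)))
  have hle : deriv F α ≤ (F x₀ - F α)/(x₀ - α) := by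
    refine le_of_tendsto htend ?_
    filter_upwards [Ioo_mem_nhdsGT_of_mem ⟨le_refl α, hx₀Ioo.1⟩] with y hy
    rw [slope_def_field]
    exact hslope_mono y hy
  have hlt : (F x₀ - F α)/(x₀ - α) < deriv F α := by
    have h2 := hmain2 x₀ hx₀Ioo
    rw [div_lt_iff₀ (sub_pos.2 hx₀Ioo.1)]
    linarith [mul_comm (deriv F α) (x₀ - α)]
  linarith
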